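/- arXiv:2408.09816 — 2 statements merged into one kernel-verified Lean document; each statement's English description precedes it below -/
import Mathlib

section
/- For every z>0 one has |θ(z) − π(z − 1/4)| < π/2. -/
open Real Set

/-- Reflection formula for the reciprocal Gamma function, valid for `s < 1`. -/
lemma inv_Gamma_eq (s : ℝ) (hs : s < 1) :
    (Real.Gamma s)⁻¹ = Real.Gamma (1 - s) * Real.sin (π * s) / π := by
  by_cases h : Real.sin (π * s) = 0
  · rw [h, mul_zero, zero_div]
    rw [Real.sin_eq_zero_iff] at h
    obtain ⟨n, hn⟩ := h
    have hsn : s = (n : ℝ) := by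
      have h' : π * (n : ℝ) = π * s := by linarith [hn]
      exact (mul_left_cancel₀ Real.pi_ne_zero h').symm
    have hn0 : n ≤ 0 := by
      by_contra hc
      push_neg at hc
      have : (1 : ℝ) ≤ (n : ℝ) := by exact_mod_cast hc
      linarith [hsn ▸ hs]
    have : Real.Gamma s = 0 := by
      rw [Real.Gamma_eq_zero_iff]
      refine ⟨(-n).toNat, ?_⟩
      have hcast : (((-n).toNat : ℕ) : ℝ) = ((-n : ℤ) : ℝ) := by
        exact_mod_cast congrArg (Int.cast : ℤ → ℝ) (Int.toNat_of_nonneg (by omega : (0:ℤ) ≤ -n))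
      rw [hsn, hcast]; push_cast; ring
    rw [this, inv_zero]
  · have hrefl := Real.Gamma_mul_Gamma_one_sub s
    have hπ := Real.pi_pos
    have hne : Real.Gamma s ≠ 0 := by
      intro h0
      rw [h0, zero_mul] at hrefl
      have : π = 0 := by field_simp at hrefl; linarith [hrefl]
      linarith
    field_simp
    rw [mul_comm] at hrefl
    field_simp at hrefl
    have h' : Real.sin (s * π) ≠ 0 := by rwa [mul_comm]
    field_simp at hrefl
    linarith [hrefl]

/-- For every `z > 0` one has `|θ(z) − π(z − 1/4)| < π/2`, where `θ`
is the angle function. -/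
theorem stmt10
    (θ : ℝ → ℝ)
    (hθc : ContinuousOn θ (Ici 0)) (hθ0 : θ 0 = -(π/2))
    (hθ : ∀ z ≥ (0:ℝ), ∃ r > (0:ℝ),
      r * Real.cos (θ z) = Real.sqrt z * (Real.Gamma (3/4 - z))⁻¹ ∧
      r * Real.sin (θ z) = -(Real.Gamma (1/4 - z))⁻¹) :
    ∀ z : ℝ, 0 < z → |θ z - π * (z - 1/4)| < π/2 := by
  have hπ := Real.pi_pos
  -- Key: the cosine of the deviation angle is positive everywhere on `[0, ∞)`.
  have key : ∀ z : ℝ, 0 ≤ z → 0 < Real.cos (θ z - π * (z - 1/4)) := by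
    intro z hz
    rcases eq_or_lt_of_le hz with h0 | h0
    · rw [← h0, hθ0]
      have harg : -(π/2) - π * ((0:ℝ) - 1/4) = -(π/4) := by ring
      rw [harg, Real.cos_neg, Real.cos_pi_div_four]
      positivity
    · obtain ⟨r, hr, hx, hy⟩ := hθ z hz
      set a : ℝ := π * (z - 1/4) with ha
      -- rewrite the reciprocal Gammas via the reflection formula
      have h1 : (Real.Gamma (3/4 - z))⁻¹ = Real.Gamma (1/4 + z) * Real.cos a / π := by
        rw [inv_Gamma_eq (3/4 - z) (by linarith), show (1:ℝ) - (3/4 - z) = 1/4 + z by ring]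
        have : Real.sin (π * (3/4 - z)) = Real.cos a := by
          have : π * (3/4 - z) = π/2 - a := by rw [ha]; ring
          rw [this, Real.sin_pi_div_two_sub]
        rw [this]
      have h2 : (Real.Gamma (1/4 - z))⁻¹ = -(Real.Gamma (3/4 + z) * Real.sin a) / π := by
        rw [inv_Gamma_eq (1/4 - z) (by linarith), show (1:ℝ) - (1/4 - z) = 3/4 + z by ring]
        have : Real.sin (π * (1/4 - z)) = -Real.sin a := by
          have : π * (1/4 - z) = -a := by rw [ha]; ring
          rw [this, Real.sin_neg]
        rw [this]
        ring
      -- compute r * cos (θ z - a) * π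
      have hcos : r * Real.cos (θ z - a) * π =
          Real.sqrt z * Real.Gamma (1/4 + z) * Real.cos a ^ 2
            + Real.Gamma (3/4 + z) * Real.sin a ^ 2 := by
        rw [Real.cos_sub]
        have : r * (Real.cos (θ z) * Real.cos a + Real.sin (θ z) * Real.sin a) * π
            = (r * Real.cos (θ z)) * Real.cos a * π + (r * Real.sin (θ z)) * Real.sin a * π := by
          ring
        rw [this, hx, hy, h1, h2]
        field_simp
      have hX : 0 < Real.sqrt z * Real.Gamma (1/4 + z) :=
        mul_pos (Real.sqrt_pos.mpr h0) (Real.Gamma_pos_of_pos (by linarith))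
      have hY : 0 < Real.Gamma (3/4 + z) := Real.Gamma_pos_of_pos (by linarith)
      have hsum := Real.sin_sq_add_cos_sq a
      have hpos : 0 < r * Real.cos (θ z - a) * π := by
        rw [hcos]
        rcases le_total (Real.sqrt z * Real.Gamma (1/4 + z)) (Real.Gamma (3/4 + z)) with hle | hle
        · nlinarith [mul_nonneg (sub_nonneg.mpr hle) (sq_nonneg (Real.sin a)),
            sq_nonneg (Real.sin a), sq_nonneg (Real.cos a)]
        · nlinarith [mul_nonneg (sub_nonneg.mpr hle) (sq_nonneg (Real.cos a)),
            sq_nonneg (Real.sin a), sq_nonneg (Real.cos a)]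
      by_contra hcn
      push_neg at hcn
      nlinarith [mul_pos hr hπ, hpos]
  -- Now conclude via the intermediate value theorem.
  intro z hz
  set g : ℝ → ℝ := fun w => θ w - π * (w - 1/4) with hgdef
  have hgc : ContinuousOn g (Icc 0 z) :=
    (hθc.sub (continuous_const.mul (continuous_id.sub continuous_const)).continuousOn).mono
      (Icc_subset_Ici_self)
  have hg0 : g 0 = -(π/4) := by simp only [hgdef, hθ0]; ring
  rw [abs_lt]
  constructor
  · by_contra h
    push_neg at h
    have hmem : -(π/2) ∈ Icc (g z) (g 0) := by
      constructor
      · simpa [hgdef] using h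
      · rw [hg0]; linarith
    obtain ⟨c, hc, hgc'⟩ := intermediate_value_Icc' hz.le hgc hmem
    have := key c hc.1
    rw [show θ c - π * (c - 1/4) = g c from rfl, hgc', Real.cos_neg,
      Real.cos_pi_div_two] at this
    exact lt_irrefl 0 this
  · by_contra h
    push_neg at h
    have hmem : π/2 ∈ Icc (g 0) (g z) := by
      constructor
      · rw [hg0]; linarith
      · simpa [hgdef] using h
    obtain ⟨c, hc, hgc'⟩ := intermediate_value_Icc hz.le hgc hmem
    have := key c hc.1
    rw [show θ c - π * (c - 1/4) = g c from rfl, hgc', Real.cos_pi_div_two] at this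
    exact lt_irrefl 0 this
end

section
/- For every z>0, F is differentiable at z and F'(z)/F(z) = −(3/32)·Σ_{n=0}^∞ 1/((n+z)(n+z+1/4)(n+z+3/4)(n+z+1)), where the series converges absolutely. -/
open Real Set Filter Topology Finset

/-- `F(z) = Γ(z+3/4)/(Γ(z+1/4)·√z)`. -/
noncomputable def F (z : ℝ) : ℝ :=
  Real.Gamma (z + 3/4) / (Real.Gamma (z + 1/4) * Real.sqrt z)

noncomputable def tf (m : ℕ) (x : ℝ) : ℝ :=
  Real.log (x + 3/4 + m) - Real.log (x + 1/4 + m)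
    - (1/2) * (Real.log ((m : ℝ) + 2) - Real.log ((m : ℝ) + 1))

noncomputable def td (m : ℕ) (x : ℝ) : ℝ := (x + 3/4 + m)⁻¹ - (x + 1/4 + m)⁻¹

lemma summable_inv_sq : Summable (fun n : ℕ => 1 / ((n : ℝ) + 1) ^ 2) := by
  have h : Summable (fun n : ℕ => 1 / (n : ℝ) ^ 2) :=
    Real.summable_one_div_nat_pow.mpr one_lt_two
  have := (summable_nat_add_iff 1).mpr h
  refine this.congr fun n => ?_
  push_cast
  ring

lemma hu_summ : Summable (fun m : ℕ => 8 / ((m : ℝ) + 1) ^ 2) := by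
  have := summable_inv_sq.mul_left 8
  refine this.congr fun n => ?_
  ring

lemma htd (m : ℕ) (y : ℝ) (hy : 0 < y) : HasDerivAt (tf m) (td m y) y := by
  have h1 : (0:ℝ) < y + 3/4 + m := by positivity
  have h2 : (0:ℝ) < y + 1/4 + m := by positivity
  have g1 : HasDerivAt (fun x : ℝ => x + 3/4 + (m : ℝ)) 1 y := by
    simpa using ((hasDerivAt_id y).add_const (3/4 : ℝ)).add_const (m : ℝ)
  have g2 : HasDerivAt (fun x : ℝ => x + 1/4 + (m : ℝ)) 1 y := by
    simpa using ((hasDerivAt_id y).add_const (1/4 : ℝ)).add_const (m : ℝ)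
  have l1 : HasDerivAt (fun x : ℝ => Real.log (x + 3/4 + m)) ((y + 3/4 + m)⁻¹) y := by
    simpa [Function.comp_def] using (Real.hasDerivAt_log h1.ne').comp y g1
  have l2 : HasDerivAt (fun x : ℝ => Real.log (x + 1/4 + m)) ((y + 1/4 + m)⁻¹) y := by
    simpa [Function.comp_def] using (Real.hasDerivAt_log h2.ne').comp y g2
  have := (l1.sub l2).sub_const ((1:ℝ)/2 * (Real.log ((m : ℝ) + 2) - Real.log ((m : ℝ) + 1)))
  unfold tf td
  exact this

lemma htd_bound (m : ℕ) (y : ℝ) (hy : 0 < y) : ‖td m y‖ ≤ 8 / ((m : ℝ) + 1) ^ 2 := by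
  have h1 : (0:ℝ) < y + 3/4 + m := by positivity
  have h2 : (0:ℝ) < y + 1/4 + m := by positivity
  have key : td m y = -(1/2 / ((y + 1/4 + m) * (y + 3/4 + m))) := by
    rw [td]; field_simp; ring
  rw [key, norm_neg, Real.norm_eq_abs, abs_of_nonneg (by positivity)]
  rw [div_le_div_iff₀ (by positivity) (by positivity)]
  have hm : (0:ℝ) ≤ m := Nat.cast_nonneg m
  nlinarith [sq_nonneg ((m : ℝ) + 1), mul_pos hy hy, hm, mul_pos hy h2, mul_pos hy h1, mul_nonneg (Nat.cast_nonneg m) hy.le]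

lemma tf_anchor_nonneg (m : ℕ) : 0 ≤ tf m (3/4) := by
  have h1 : (0:ℝ) < (m:ℝ) + 1 := by positivity
  have h2 : (0:ℝ) < (m:ℝ) + 2 := by positivity
  have h3 : (0:ℝ) < (m:ℝ) + 3/2 := by positivity
  have e : tf m (3/4) = (1/2) * (Real.log (((m:ℝ) + 3/2)^2) - (Real.log ((m:ℝ)+1) + Real.log ((m:ℝ)+2))) := by
    unfold tf
    rw [Real.log_pow]
    push_cast
    ring_nf
  rw [e]
  have hmul : Real.log ((m:ℝ)+1) + Real.log ((m:ℝ)+2) = Real.log (((m:ℝ)+1) * ((m:ℝ)+2)) :=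
    (Real.log_mul h1.ne' h2.ne').symm
  rw [hmul]
  have : Real.log (((m:ℝ)+1) * ((m:ℝ)+2)) ≤ Real.log (((m:ℝ) + 3/2)^2) :=
    Real.log_le_log (by positivity) (by nlinarith)
  linarith

lemma tf_anchor_le (m : ℕ) : tf m (3/4) ≤ (1/8) * (1 / ((m:ℝ)+1)^2) := by
  have h1 : (0:ℝ) < (m:ℝ) + 1 := by positivity
  have h2 : (0:ℝ) < (m:ℝ) + 2 := by positivity
  have h3 : (0:ℝ) < (m:ℝ) + 3/2 := by positivity
  have e : tf m (3/4) = (1/2) * (Real.log (((m:ℝ) + 3/2)^2) - (Real.log ((m:ℝ)+1) + Real.log ((m:ℝ)+2))) := by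
    unfold tf
    rw [Real.log_pow]
    push_cast
    ring_nf
  have hmul : Real.log ((m:ℝ)+1) + Real.log ((m:ℝ)+2) = Real.log (((m:ℝ)+1) * ((m:ℝ)+2)) :=
    (Real.log_mul h1.ne' h2.ne').symm
  have hb : (0:ℝ) < ((m:ℝ)+1) * ((m:ℝ)+2) := by positivity
  have hdiv : Real.log (((m:ℝ) + 3/2)^2) - Real.log (((m:ℝ)+1) * ((m:ℝ)+2))
      = Real.log ((((m:ℝ) + 3/2)^2) / (((m:ℝ)+1) * ((m:ℝ)+2))) := by
    rw [Real.log_div (by positivity) hb.ne']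
  have hle : Real.log ((((m:ℝ) + 3/2)^2) / (((m:ℝ)+1) * ((m:ℝ)+2)))
      ≤ (((m:ℝ) + 3/2)^2) / (((m:ℝ)+1) * ((m:ℝ)+2)) - 1 :=
    Real.log_le_sub_one_of_pos (by positivity)
  have hval : (((m:ℝ) + 3/2)^2) / (((m:ℝ)+1) * ((m:ℝ)+2)) - 1
      = (1/4) / (((m:ℝ)+1) * ((m:ℝ)+2)) := by
    field_simp
    ring
  have hcmp : (1/4) / (((m:ℝ)+1) * ((m:ℝ)+2)) ≤ (1/4) / (((m:ℝ)+1)^2) := by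
    apply div_le_div_of_nonneg_left (by norm_num) (by positivity)
    nlinarith
  rw [e, hmul, hdiv]
  calc (1/2) * Real.log ((((m:ℝ) + 3/2)^2) / (((m:ℝ)+1) * ((m:ℝ)+2)))
      ≤ (1/2) * ((1/4) / (((m:ℝ)+1)^2)) := by
        have := hle.trans (hval.le.trans hcmp)
        linarith
    _ = (1/8) * (1 / ((m:ℝ)+1)^2) := by ring

lemma tf_anchor_summable : Summable (fun m : ℕ => tf m (3/4)) := by
  refine Summable.of_nonneg_of_le tf_anchor_nonneg tf_anchor_le ?_
  exact summable_inv_sq.mul_left (1/8)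


lemma hasDerivAt_tsum_tf {z : ℝ} (hz : 0 < z) :
    HasDerivAt (fun x => ∑' m, tf m x) (∑' m, td m z) z :=
  hasDerivAt_tsum_of_isPreconnected hu_summ isOpen_Ioi (isPreconnected_Ioi)
    (fun m y hy => htd m y hy) (fun m y hy => htd_bound m y hy)
    (by norm_num : (3/4:ℝ) ∈ Ioi (0:ℝ)) tf_anchor_summable hz

lemma summable_tf {z : ℝ} (hz : 0 < z) : Summable (fun m => tf m z) :=
  summable_of_summable_hasDerivAt_of_isPreconnected hu_summ isOpen_Ioi (isPreconnected_Ioi)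
    (fun m y hy => htd m y hy) (fun m y hy => htd_bound m y hy)
    (by norm_num : (3/4:ℝ) ∈ Ioi (0:ℝ)) tf_anchor_summable hz

lemma tele_log (n : ℕ) :
    ∑ m ∈ Finset.range (n+1), (Real.log ((m:ℝ)+2) - Real.log ((m:ℝ)+1))
      = Real.log ((n:ℝ)+2) := by
  calc ∑ m ∈ Finset.range (n+1), (Real.log ((m:ℝ)+2) - Real.log ((m:ℝ)+1))
      = ∑ m ∈ Finset.range (n+1),
          ((fun i : ℕ => Real.log ((i:ℝ)+1)) (m+1) - (fun i : ℕ => Real.log ((i:ℝ)+1)) m) := by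
        refine Finset.sum_congr rfl fun m _ => ?_
        push_cast
        ring_nf
    _ = (fun i : ℕ => Real.log ((i:ℝ)+1)) (n+1) - (fun i : ℕ => Real.log ((i:ℝ)+1)) 0 :=
        by exact Finset.sum_range_sub (fun i : ℕ => Real.log ((i:ℝ)+1)) (n+1)
    _ = Real.log ((n:ℝ)+2) := by
        push_cast
        norm_num
        ring_nf

lemma partial_tf (z : ℝ) (n : ℕ) :
    ∑ m ∈ Finset.range (n+1), tf m z
      = (Real.BohrMollerup.logGammaSeq (z+1/4) n - Real.BohrMollerup.logGammaSeq (z+3/4) n)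
        + ((1/2) * Real.log n - (1/2) * Real.log ((n:ℝ)+2)) := by
  have expand : ∑ m ∈ Finset.range (n+1), tf m z
      = (∑ m ∈ Finset.range (n+1), Real.log (z+3/4+m)
          - ∑ m ∈ Finset.range (n+1), Real.log (z+1/4+m))
        - (1/2) * ∑ m ∈ Finset.range (n+1), (Real.log ((m:ℝ)+2) - Real.log ((m:ℝ)+1)) := by
    simp only [tf]
    rw [Finset.mul_sum, ← Finset.sum_sub_distrib, ← Finset.sum_sub_distrib]
  rw [expand, tele_log]
  simp only [Real.BohrMollerup.logGammaSeq]
  have e1 : ∑ m ∈ Finset.range (n+1), Real.log (z+3/4+m)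
      = ∑ m ∈ Finset.range (n+1), Real.log ((z+3/4)+m) := rfl
  have e2 : ∑ m ∈ Finset.range (n+1), Real.log (z+1/4+m)
      = ∑ m ∈ Finset.range (n+1), Real.log ((z+1/4)+m) := rfl
  rw [e1, e2]
  ring

lemma tail_log_tendsto :
    Tendsto (fun n : ℕ => (1/2) * Real.log n - (1/2) * Real.log ((n:ℝ)+2)) atTop (𝓝 0) := by
  have h0 : Tendsto (fun n : ℕ => ((n:ℝ)+2)/n) atTop (𝓝 1) := by
    have h2 : Tendsto (fun n : ℕ => 1 + 2/(n:ℝ)) atTop (𝓝 (1+0)) :=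
      tendsto_const_nhds.add (tendsto_const_div_atTop_nhds_zero_nat 2)
    rw [add_zero] at h2
    refine h2.congr' ?_
    filter_upwards [eventually_ge_atTop 1] with n hn
    have : (n:ℝ) ≠ 0 := by positivity
    field_simp
  have hlog : Tendsto (fun n : ℕ => Real.log (((n:ℝ)+2)/n)) atTop (𝓝 0) := by
    have := (Real.continuousAt_log one_ne_zero).tendsto.comp h0
    simpa [Function.comp_def] using this
  have := hlog.const_mul (-(1/2) : ℝ)
  rw [mul_zero] at this
  refine this.congr' ?_
  filter_upwards [eventually_ge_atTop 1] with n hn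
  have hn0 : (n:ℝ) ≠ 0 := by positivity
  rw [Real.log_div (by positivity) hn0]
  ring

lemma tsum_tf_eq {z : ℝ} (hz : 0 < z) :
    ∑' m, tf m z = Real.log (Real.Gamma (z+1/4)) - Real.log (Real.Gamma (z+3/4)) := by
  have hs := (summable_tf hz).hasSum
  have h1 : Tendsto (fun n => ∑ m ∈ Finset.range n, tf m z) atTop (𝓝 (∑' m, tf m z)) :=
    hs.tendsto_sum_nat
  have h2 : Tendsto (fun n => ∑ m ∈ Finset.range (n+1), tf m z) atTop (𝓝 (∑' m, tf m z)) :=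
    h1.comp (tendsto_add_atTop_nat 1)
  have hA := Real.BohrMollerup.tendsto_log_gamma (show (0:ℝ) < z + 1/4 by linarith)
  have hB := Real.BohrMollerup.tendsto_log_gamma (show (0:ℝ) < z + 3/4 by linarith)
  have h3 : Tendsto (fun n => ∑ m ∈ Finset.range (n+1), tf m z) atTop
      (𝓝 ((Real.log (Real.Gamma (z+1/4)) - Real.log (Real.Gamma (z+3/4))) + 0)) := by
    refine Tendsto.congr (fun n => (partial_tf z n).symm) ?_
    exact (hA.sub hB).add tail_log_tendsto
  rw [add_zero] at h3
  exact tendsto_nhds_unique h2 h3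

lemma F_eq {z : ℝ} (hz : 0 < z) :
    F z = Real.exp (-(∑' m, tf m z) - (1/2) * Real.log z) := by
  have hG1 : 0 < Real.Gamma (z+1/4) := Real.Gamma_pos_of_pos (by linarith)
  have hG3 : 0 < Real.Gamma (z+3/4) := Real.Gamma_pos_of_pos (by linarith)
  have hsqrt : Real.sqrt z = Real.exp ((1/2) * Real.log z) := by
    rw [Real.sqrt_eq_rpow, Real.rpow_def_of_pos hz]
    ring_nf
  rw [tsum_tf_eq hz,
    show -(Real.log (Real.Gamma (z+1/4)) - Real.log (Real.Gamma (z+3/4))) - (1/2) * Real.log z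
      = Real.log (Real.Gamma (z+3/4)) - (Real.log (Real.Gamma (z+1/4)) + (1/2) * Real.log z)
      from by ring,
    Real.exp_sub, Real.exp_add, Real.exp_log hG3, Real.exp_log hG1, ← hsqrt, F]

lemma hasDerivAt_F {z : ℝ} (hz : 0 < z) :
    HasDerivAt F (F z * (-(∑' m, td m z) - (1/2) * z⁻¹)) z := by
  have hinner : HasDerivAt (fun x => -(∑' m, tf m x) - (1/2) * Real.log x)
      (-(∑' m, td m z) - (1/2) * z⁻¹) z :=
    ((hasDerivAt_tsum_tf hz).neg).sub ((Real.hasDerivAt_log hz.ne').const_mul (1/2))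
  have hE := hinner.exp
  have heq : F =ᶠ[𝓝 z] fun x => Real.exp (-(∑' m, tf m x) - (1/2) * Real.log x) := by
    filter_upwards [Ioi_mem_nhds hz] with x hx
    exact F_eq hx
  have := hE.congr_of_eventuallyEq heq
  rwa [← F_eq hz] at this

lemma hasSum_half_inv {z : ℝ} (hz : 0 < z) :
    HasSum (fun m : ℕ => (1/2) * ((z+m)⁻¹ - (z+m+1)⁻¹)) ((1/2) * z⁻¹) := by
  have hnn : ∀ m : ℕ, 0 ≤ (1/2) * ((z+(m:ℝ))⁻¹ - (z+m+1)⁻¹) := by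
    intro m
    have h1 : (0:ℝ) < z + m := by positivity
    have h2 : (0:ℝ) < z + m + 1 := by positivity
    have := inv_anti₀ h1 (by linarith : z + (m:ℝ) ≤ z + m + 1)
    linarith
  rw [hasSum_iff_tendsto_nat_of_nonneg hnn]
  have htel : ∀ n : ℕ, ∑ m ∈ Finset.range n, (1/2) * ((z+(m:ℝ))⁻¹ - (z+m+1)⁻¹)
      = (1/2) * z⁻¹ - (1/2) * (z+(n:ℝ))⁻¹ := by
    intro n
    calc ∑ m ∈ Finset.range n, (1/2) * ((z+(m:ℝ))⁻¹ - (z+m+1)⁻¹)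
        = ∑ m ∈ Finset.range n,
            ((fun i : ℕ => (1/2) * (z+(i:ℝ))⁻¹) m - (fun i : ℕ => (1/2) * (z+(i:ℝ))⁻¹) (m+1)) := by
          refine Finset.sum_congr rfl fun m _ => ?_
          push_cast
          ring_nf
      _ = (fun i : ℕ => (1/2) * (z+(i:ℝ))⁻¹) 0 - (fun i : ℕ => (1/2) * (z+(i:ℝ))⁻¹) n :=
          by exact Finset.sum_range_sub' (fun i : ℕ => (1/2) * (z+(i:ℝ))⁻¹) n
      _ = (1/2) * z⁻¹ - (1/2) * (z+(n:ℝ))⁻¹ := by norm_num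
  have hz0 : Tendsto (fun n : ℕ => (1/2) * (z+(n:ℝ))⁻¹) atTop (𝓝 0) := by
    have h1 : Tendsto (fun n : ℕ => z + (n:ℝ)) atTop atTop :=
      tendsto_atTop_add_const_left _ z tendsto_natCast_atTop_atTop
    have := h1.inv_tendsto_atTop.const_mul (1/2 : ℝ)
    simpa using this
  have : Tendsto (fun n : ℕ => (1/2) * z⁻¹ - (1/2) * (z+(n:ℝ))⁻¹) atTop (𝓝 ((1/2)*z⁻¹ - 0)) :=
    tendsto_const_nhds.sub hz0
  rw [sub_zero] at this
  exact this.congr fun n => (htel n).symm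

/-- For every `z > 0`, `F` is differentiable at `z` and
`F'(z)/F(z) = −(3/32)·Σ_{n=0}^∞ 1/((n+z)(n+z+1/4)(n+z+3/4)(n+z+1))`, the series
converging absolutely. -/
theorem stmt12 :
    ∀ z : ℝ, 0 < z →
      DifferentiableAt ℝ F z ∧
      Summable (fun n : ℕ =>
        |1 / ((n+z) * (n+z+1/4) * (n+z+3/4) * (n+z+1))|) ∧
      deriv F z / F z
        = -(3/32) * ∑' n : ℕ, 1 / ((n+z) * (n+z+1/4) * (n+z+3/4) * (n+z+1)) := by
  intro z hz
  have hF' := hasDerivAt_F hz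
  have hG1 : 0 < Real.Gamma (z+1/4) := Real.Gamma_pos_of_pos (by linarith)
  have hG3 : 0 < Real.Gamma (z+3/4) := Real.Gamma_pos_of_pos (by linarith)
  have hFpos : 0 < F z := by
    rw [F]
    exact div_pos hG3 (mul_pos hG1 (Real.sqrt_pos.mpr hz))
  have htel := hasSum_half_inv hz
  have htd_s : Summable (fun m => td m z) :=
    Summable.of_norm_bounded hu_summ (fun m => htd_bound m z hz)
  set g : ℕ → ℝ := fun n => 1 / (((n:ℝ)+z) * ((n:ℝ)+z+1/4) * ((n:ℝ)+z+3/4) * ((n:ℝ)+z+1))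
    with hgdef
  have hg_le : ∀ n : ℕ, g n ≤ (32/3) * ((1/2) * ((z+(n:ℝ))⁻¹ - (z+n+1)⁻¹)) := by
    intro n
    have p1 : (0:ℝ) < (n:ℝ) + z := by positivity
    have p2 : (0:ℝ) < (n:ℝ) + z + 1/4 := by positivity
    have p3 : (0:ℝ) < (n:ℝ) + z + 3/4 := by positivity
    have p4 : (0:ℝ) < (n:ℝ) + z + 1 := by positivity
    have key : (32/3 : ℝ) * ((1/2) * ((z+(n:ℝ))⁻¹ - (z+n+1)⁻¹))
        = (16/3) / ((z+(n:ℝ)) * (z+n+1)) := by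
      field_simp
      ring
    rw [key, hgdef]
    rw [div_le_div_iff₀ (by positivity) (by positivity)]
    nlinarith [mul_pos p1 p4, mul_pos (mul_pos p1 p2) (mul_pos p3 p4), sq_nonneg ((n:ℝ)+z),
      mul_pos p1 (mul_pos p2 p3)]
  have hsum_g : Summable g :=
    Summable.of_nonneg_of_le (fun n => by positivity) hg_le (htel.summable.mul_left (32/3))
  have habs : Summable (fun n : ℕ =>
      |1 / (((n:ℝ)+z) * ((n:ℝ)+z+1/4) * ((n:ℝ)+z+3/4) * ((n:ℝ)+z+1))|) := hsum_g.abs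
  refine ⟨hF'.differentiableAt, habs, ?_⟩
  rw [hF'.deriv, mul_div_cancel_left₀ _ hFpos.ne']
  have h3 : ∀ m : ℕ, -(td m z) - (1/2)*((z+(m:ℝ))⁻¹-(z+m+1)⁻¹) = -(3/32) * g m := by
    intro m
    have p1 : (0:ℝ) < (m:ℝ) + z := by positivity
    have p2 : (0:ℝ) < (m:ℝ) + z + 1/4 := by positivity
    have p3 : (0:ℝ) < (m:ℝ) + z + 3/4 := by positivity
    have p4 : (0:ℝ) < (m:ℝ) + z + 1 := by positivity
    have q1 : (0:ℝ) < z + 1/4 + m := by positivity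
    have q2 : (0:ℝ) < z + 3/4 + m := by positivity
    rw [td, hgdef]
    field_simp
    ring
  calc -(∑' m, td m z) - (1/2) * z⁻¹
      = ∑' m : ℕ, -(td m z) - ∑' m : ℕ, (1/2)*((z+(m:ℝ))⁻¹-(z+m+1)⁻¹) := by
        rw [tsum_neg, htel.tsum_eq]
    _ = ∑' m : ℕ, (-(td m z) - (1/2)*((z+(m:ℝ))⁻¹-(z+m+1)⁻¹)) := (Summable.tsum_sub htd_s.neg htel.summable).symm
    _ = ∑' m : ℕ, (-(3/32) * g m) := tsum_congr h3
    _ = -(3/32) * ∑' m : ℕ, g m := tsum_mul_left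
end
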